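/- Let η ≥ 1 be a real number, ω ∈ ℂ, and let (λ_j)_{j≥1} be a sequence of real numbers for which there exists ρ > 0 with |λ_j| ≤ ρ j for all j ≥ 1. Then the following two conditions are equivalent: (i) for each ε > 0 there exists a constant C_ε > 0 such that |τ − ω λ_j| ≥ C_ε · exp(−ε (|τ| + j)^{1/η}) for all τ ∈ ℤ and all j ≥ 1; (ii) for each δ > 0 there exists a constant C_δ > 0 such that |1 − e^{2πi ω λ_j}| ≥ C_δ · exp(−δ j^{1/η}) for all j ≥ 1. -/

import Mathlib

open Real

private lemma aux_factor (z : ℂ) :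
    1 - Complex.exp (2 * Real.pi * Complex.I * z)
      = -2 * Complex.I * Complex.exp (Real.pi * Complex.I * z) * Complex.sin (Real.pi * z) := by
  rw [Complex.sin]
  have h1 : Complex.exp (Real.pi * Complex.I * z) * Complex.exp (-(Real.pi * z) * Complex.I) = 1 := by
    rw [← Complex.exp_add, show (Real.pi : ℂ) * Complex.I * z + -((Real.pi : ℂ) * z) * Complex.I = 0 by ring,
      Complex.exp_zero]
  have h2 : Complex.exp (Real.pi * Complex.I * z) * Complex.exp ((Real.pi * z) * Complex.I)
      = Complex.exp (2 * Real.pi * Complex.I * z) := by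
    rw [← Complex.exp_add]; ring_nf
  have hI : Complex.I * Complex.I = -1 := Complex.I_mul_I
  linear_combination -h1 + h2 + Complex.exp ((Real.pi:ℂ) * Complex.I * z) *
    (Complex.exp (-((Real.pi:ℂ) * z) * Complex.I) - Complex.exp (((Real.pi:ℂ) * z) * Complex.I)) * hI

private lemma aux_abs_sin_sq (z : ℂ) :
    (‖Complex.sin z‖)^2 = Real.sin z.re ^ 2 + Real.sinh z.im ^ 2 := by
  rw [Complex.sq_norm, Complex.sin_eq, ← Complex.ofReal_sin, ← Complex.ofReal_cosh,
    ← Complex.ofReal_cos, ← Complex.ofReal_sinh, ← Complex.ofReal_mul, ← Complex.ofReal_mul,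
    Complex.normSq_add_mul_I]
  have h := Real.sin_sq_add_cos_sq z.re
  have h2 := Real.cosh_sq z.im
  nlinarith [h, h2]

private lemma aux_jordan {d : ℝ} (hd : |d| ≤ 1/2) : 2 * |d| ≤ |Real.sin (Real.pi * d)| := by
  have h1 : Real.pi * |d| ≤ Real.pi / 2 := by nlinarith [Real.pi_pos, abs_nonneg d]
  have h2 : 2 / Real.pi * (Real.pi * |d|) ≤ Real.sin (Real.pi * |d|) :=
    Real.mul_le_sin (by positivity) h1
  have h3 : 2 / Real.pi * (Real.pi * |d|) = 2 * |d| := by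
    field_simp
  have h4 : Real.sin (Real.pi * |d|) ≤ |Real.sin (Real.pi * d)| := by
    rcases abs_cases d with ⟨h, _⟩ | ⟨h, _⟩
    · rw [h]; exact le_abs_self _
    · rw [h, mul_neg, Real.sin_neg]; exact neg_le_abs _
  linarith

private lemma aux_sinh_sq (x : ℝ) : x ^ 2 ≤ Real.sinh x ^ 2 := by
  rcases le_or_gt 0 x with h | h
  · nlinarith [Real.self_le_sinh_iff.2 h]
  · have h' : -x ≤ Real.sinh (-x) := Real.self_le_sinh_iff.2 (by linarith)
    rw [Real.sinh_neg] at h'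
    nlinarith

private lemma aux_lower (z : ℂ) (τ : ℤ) (h1 : |z.re - τ| ≤ 1/2) (h2 : |z.im| ≤ 1) :
    4 * Real.exp (-Real.pi) * ‖z - τ‖ ≤
      ‖1 - Complex.exp (2 * Real.pi * Complex.I * z)‖ := by
  have habs : ‖1 - Complex.exp (2 * Real.pi * Complex.I * z)‖
      = 2 * Real.exp (-(Real.pi * z.im)) * ‖Complex.sin (Real.pi * z)‖ := by
    rw [aux_factor, norm_mul, norm_mul]
    have : ‖-2 * Complex.I‖ = 2 := by simp
    rw [this, Complex.norm_exp]
    congr 2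
    simp [Complex.mul_re, Complex.mul_im]
  rw [habs]
  have hsin : 2 * ‖z - τ‖ ≤ ‖Complex.sin (Real.pi * z)‖ := by
    have key : (2 * ‖z - τ‖)^2 ≤ (‖Complex.sin (Real.pi * z)‖)^2 := by
      rw [aux_abs_sin_sq]
      have hre : ((Real.pi : ℂ) * z).re = Real.pi * z.re := by simp
      have him : ((Real.pi : ℂ) * z).im = Real.pi * z.im := by simp
      rw [hre, him]
      have hper : Real.sin (Real.pi * z.re) ^ 2 = Real.sin (Real.pi * (z.re - τ)) ^ 2 := by
        have hp := Real.sin_add_int_mul_pi (Real.pi * (z.re - τ)) τ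
        have harg : Real.pi * (z.re - τ) + τ * Real.pi = Real.pi * z.re := by ring
        rw [harg] at hp
        rw [hp]
        have hsq : ((-1 : ℝ) ^ τ) * ((-1 : ℝ) ^ τ) = 1 := by
          rw [← zpow_add₀ (by norm_num : (-1:ℝ) ≠ 0), show τ + τ = 2 * τ by ring, zpow_mul]
          norm_num
        nlinarith [hsq]
      rw [hper]
      have hj : 2 * |z.re - τ| ≤ |Real.sin (Real.pi * (z.re - τ))| := aux_jordan h1
      have hs : (Real.pi * z.im) ^ 2 ≤ Real.sinh (Real.pi * z.im) ^ 2 := aux_sinh_sq _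
      have hzτ : (‖z - τ‖)^2 = (z.re - τ)^2 + z.im^2 := by
        rw [Complex.sq_norm, Complex.normSq_apply]
        simp [sq]
      have h4sq : 4 * (z.re - (τ:ℝ))^2 ≤ Real.sin (Real.pi * (z.re - τ)) ^ 2 := by
        have hm := pow_le_pow_left₀ (by positivity : (0:ℝ) ≤ 2 * |z.re - τ|) hj 2
        nlinarith [sq_abs (z.re - (τ:ℝ)), sq_abs (Real.sin (Real.pi * (z.re - τ)))]
      have hb : 4 * z.im^2 ≤ Real.sinh (Real.pi * z.im) ^ 2 := by
        have hπ : (2:ℝ) ≤ Real.pi := by nlinarith [Real.pi_gt_three]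
        have h4π : (4:ℝ) ≤ Real.pi ^ 2 := by nlinarith
        nlinarith [hs, sq_nonneg z.im, h4π, mul_le_mul_of_nonneg_right h4π (sq_nonneg z.im)]
      rw [mul_pow, hzτ]
      linarith
    have h2a : 0 ≤ 2 * ‖z - τ‖ := by positivity
    nlinarith [norm_nonneg (Complex.sin (Real.pi * z))]
  have hexp : Real.exp (-Real.pi) ≤ Real.exp (-(Real.pi * z.im)) := by
    apply Real.exp_le_exp.2
    have := (abs_le.1 h2).2
    nlinarith [Real.pi_pos]
  calc 4 * Real.exp (-Real.pi) * ‖z - τ‖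
      = 2 * Real.exp (-Real.pi) * (2 * ‖z - τ‖) := by ring
    _ ≤ 2 * Real.exp (-(Real.pi * z.im)) * (2 * ‖z - τ‖) := by
        have := norm_nonneg (z - τ)
        nlinarith [Real.exp_pos (-Real.pi)]
    _ ≤ 2 * Real.exp (-(Real.pi * z.im)) * ‖Complex.sin (Real.pi * z)‖ := by
        have := Real.exp_pos (-(Real.pi * z.im))
        nlinarith

private lemma aux_lower_im (z : ℂ) (h : 1 ≤ |z.im|) :
    1 - Real.exp (-(2 * Real.pi)) ≤ ‖1 - Complex.exp (2 * Real.pi * Complex.I * z)‖ := by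
  have hub : |1 - ‖Complex.exp (2 * Real.pi * Complex.I * z)‖|
      ≤ ‖1 - Complex.exp (2 * Real.pi * Complex.I * z)‖ := by
    have := abs_norm_sub_norm_le 1 (Complex.exp (2 * Real.pi * Complex.I * z))
    simpa using this
  have habs : ‖Complex.exp (2 * Real.pi * Complex.I * z)‖
      = Real.exp (-(2 * Real.pi * z.im)) := by
    rw [Complex.norm_exp]
    congr 1
    simp [Complex.mul_re, Complex.mul_im]
  rw [habs] at hub
  rcases abs_cases z.im with ⟨he, _⟩ | ⟨he, _⟩
  · have him : 1 ≤ z.im := by rw [← he]; exact h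
    have : Real.exp (-(2 * Real.pi * z.im)) ≤ Real.exp (-(2 * Real.pi)) := by
      apply Real.exp_le_exp.2; nlinarith [Real.pi_pos]
    have hle : 1 - Real.exp (-(2*Real.pi*z.im)) ≤ |1 - Real.exp (-(2 * Real.pi * z.im))| :=
      le_abs_self _
    linarith
  · have him : z.im ≤ -1 := by nlinarith [abs_nonneg z.im]
    have h1 : Real.exp (2 * Real.pi) ≤ Real.exp (-(2 * Real.pi * z.im)) := by
      apply Real.exp_le_exp.2; nlinarith [Real.pi_pos]
    have h2 : (2:ℝ) ≤ Real.exp (2 * Real.pi) := by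
      nlinarith [Real.add_one_le_exp (2 * Real.pi), Real.pi_gt_three]
    have h3 : Real.exp (-(2 * Real.pi * z.im)) - 1 ≤ |1 - Real.exp (-(2 * Real.pi * z.im))| := by
      rw [abs_sub_comm]; exact le_abs_self _
    have h4 : Real.exp (-(2 * Real.pi)) > 0 := Real.exp_pos _
    linarith

private lemma aux_upper (z : ℂ) (τ : ℤ) (h : 2 * Real.pi * ‖z - τ‖ ≤ 1) :
    ‖1 - Complex.exp (2 * Real.pi * Complex.I * z)‖
      ≤ 4 * Real.pi * ‖z - τ‖ := by
  have h0 : Complex.exp ((τ:ℂ) * (2 * Real.pi * Complex.I)) = 1 :=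
    Complex.exp_int_mul_two_pi_mul_I τ
  have hper : Complex.exp (2 * Real.pi * Complex.I * z)
      = Complex.exp (2 * Real.pi * Complex.I * (z - τ)) := by
    calc Complex.exp (2 * Real.pi * Complex.I * z)
        = Complex.exp (2 * Real.pi * Complex.I * (z - τ) + (τ:ℂ) * (2 * Real.pi * Complex.I)) := by
          congr 1; ring
      _ = Complex.exp (2 * Real.pi * Complex.I * (z - τ)) *
            Complex.exp ((τ:ℂ) * (2 * Real.pi * Complex.I)) := Complex.exp_add _ _
      _ = Complex.exp (2 * Real.pi * Complex.I * (z - τ)) := by rw [h0, mul_one]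
  have habsw : ‖2 * Real.pi * Complex.I * (z - τ)‖
      = 2 * Real.pi * ‖z - τ‖ := by
    rw [norm_mul, norm_mul, norm_mul, Complex.norm_two, Complex.norm_real, Real.norm_eq_abs, Complex.norm_I,
      abs_of_nonneg Real.pi_nonneg, mul_one]
  rw [hper]
  have hkey := Complex.norm_exp_sub_one_le (x := 2 * Real.pi * Complex.I * (z - τ))
    (by rw [habsw]; exact h)
  calc ‖1 - Complex.exp (2 * Real.pi * Complex.I * (z - τ))‖
      = ‖Complex.exp (2 * Real.pi * Complex.I * (z - τ)) - 1‖ := by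
        rw [← norm_neg]; ring_nf
    _ ≤ 2 * ‖2 * Real.pi * Complex.I * (z - τ)‖ := hkey
    _ = 4 * Real.pi * ‖z - τ‖ := by rw [habsw]; ring

set_option maxHeartbeats 1000000 in
/-- Lemma 2.5: equivalence of two Diophantine-type conditions for `η ≥ 1`, `ω ∈ ℂ` and a
sequence `(λ_j)` of real numbers of at most linear growth. -/
theorem stmt1 (η : ℝ) (hη : 1 ≤ η) (ω : ℂ) (l : ℕ → ℝ)
    (hl : ∃ ρ > (0 : ℝ), ∀ j : ℕ, 1 ≤ j → |l j| ≤ ρ * (j : ℝ)) :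
    (∀ ε > (0 : ℝ), ∃ C > (0 : ℝ), ∀ (τ : ℤ) (j : ℕ), 1 ≤ j →
        ‖(τ : ℂ) - ω * (l j : ℂ)‖
          ≥ C * Real.exp (-ε * ((|τ| : ℝ) + (j : ℝ)) ^ (1 / η)))
    ↔
    (∀ δ > (0 : ℝ), ∃ C > (0 : ℝ), ∀ j : ℕ, 1 ≤ j →
        ‖1 - Complex.exp (2 * Real.pi * Complex.I * ω * (l j : ℂ))‖
          ≥ C * Real.exp (-δ * (j : ℝ) ^ (1 / η))) := by
  have hηpos : (0:ℝ) < η := lt_of_lt_of_le one_pos hη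
  have hinv : 1 / η ≤ 1 := by
    rw [div_le_one hηpos]; exact hη
  have hinvpos : (0:ℝ) < 1 / η := by positivity
  obtain ⟨ρ, hρ, hρl⟩ := hl
  constructor
  · intro h δ hδ
    set K : ℝ := ‖ω‖ * ρ + 2 with hK
    have hK2 : (2:ℝ) ≤ K := by
      have := norm_nonneg ω
      nlinarith [hρ.le]
    have hKpos : (0:ℝ) < K := by linarith
    obtain ⟨C, hC, hCf⟩ := h (δ / K) (by positivity)
    have hc1 : (0:ℝ) < 1 - Real.exp (-(2*Real.pi)) := by
      have : Real.exp (-(2*Real.pi)) < 1 := by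
        rw [Real.exp_lt_one_iff]
        nlinarith [Real.pi_pos]
      linarith
    refine ⟨min (1 - Real.exp (-(2*Real.pi))) (4 * Real.exp (-Real.pi) * C), by positivity, ?_⟩
    intro j hj
    set z : ℂ := ω * (l j : ℂ) with hz
    have harg : 2 * (Real.pi:ℂ) * Complex.I * ω * (l j : ℂ) = 2 * Real.pi * Complex.I * z := by
      rw [hz]; ring
    rw [ge_iff_le, harg]
    have hjpos : (0:ℝ) < (j:ℝ) := by exact_mod_cast hj
    have hrp0 : (0:ℝ) ≤ (j:ℝ) ^ (1/η) := Real.rpow_nonneg hjpos.le _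
    have hexple : Real.exp (-δ * (j:ℝ) ^ (1/η)) ≤ 1 := by
      rw [Real.exp_le_one_iff]
      nlinarith
    rcases le_or_gt 1 |z.im| with him | him
    · have hlow := aux_lower_im z him
      calc min (1 - Real.exp (-(2*Real.pi))) (4 * Real.exp (-Real.pi) * C) *
            Real.exp (-δ * (j:ℝ) ^ (1/η))
          ≤ (1 - Real.exp (-(2*Real.pi))) * 1 := by
            apply mul_le_mul (min_le_left _ _) hexple (Real.exp_pos _).le hc1.le
        _ ≤ ‖1 - Complex.exp (2 * Real.pi * Complex.I * z)‖ := by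
            rw [mul_one]; exact hlow
    · set τ : ℤ := round z.re with hτ
      have h1 : |z.re - τ| ≤ 1/2 := abs_sub_round z.re
      have hlow := aux_lower z τ h1 him.le
      have hCτ := hCf τ j hj
      rw [ge_iff_le, ← hz] at hCτ
      -- bound on |τ|
      have hzre : |z.re| ≤ ‖ω‖ * (ρ * j) := by
        have h2 : |z.re| ≤ ‖z‖ := Complex.abs_re_le_norm z
        have h3 : ‖z‖ = ‖ω‖ * |l j| := by
          rw [hz, norm_mul, Complex.norm_real, Real.norm_eq_abs]
        have h4 := hρl j hj
        have := norm_nonneg ω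
        nlinarith
    -- |τ| ≤ |z.re| + 1/2
      have hτb : |(τ:ℝ)| ≤ ‖ω‖ * ρ * j + 1/2 := by
        have : |(τ:ℝ)| ≤ |z.re - τ| + |z.re| := by
          have := abs_sub_abs_le_abs_sub (τ:ℝ) z.re
          have h5 := abs_sub_comm (z.re) (τ:ℝ)
          have h6 := le_abs_self (|(τ:ℝ)| - |z.re|)
          have h7 := abs_abs_sub_abs_le_abs_sub (τ:ℝ) z.re
          nlinarith [abs_nonneg (z.re - (τ:ℝ))]
        nlinarith
      have hsum : |(τ:ℝ)| + (j:ℝ) ≤ K * j := by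
        have : (1:ℝ) ≤ (j:ℝ) := by exact_mod_cast hj
        nlinarith [norm_nonneg ω, hρ.le]
      have hrpow : (|(τ:ℝ)| + (j:ℝ)) ^ (1/η) ≤ K * (j:ℝ) ^ (1/η) := by
        have e1 : (|(τ:ℝ)| + (j:ℝ)) ^ (1/η) ≤ (K * j) ^ (1/η) :=
          Real.rpow_le_rpow (by positivity) hsum hinvpos.le
        have e2 : (K * (j:ℝ)) ^ (1/η) = K ^ (1/η) * (j:ℝ) ^ (1/η) :=
          Real.mul_rpow hKpos.le (Nat.cast_nonneg j)
        have e3 : K ^ (1/η) ≤ K := by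
          calc K ^ (1/η) ≤ K ^ (1:ℝ) :=
                Real.rpow_le_rpow_of_exponent_le (by linarith) hinv
            _ = K := Real.rpow_one K
        calc (|(τ:ℝ)| + (j:ℝ)) ^ (1/η) ≤ K ^ (1/η) * (j:ℝ) ^ (1/η) := by rw [← e2]; exact e1
          _ ≤ K * (j:ℝ) ^ (1/η) := mul_le_mul_of_nonneg_right e3 hrp0
      have hexp2 : Real.exp (-δ * (j:ℝ) ^ (1/η))
          ≤ Real.exp (-(δ/K) * ((|(τ:ℝ)|) + (j:ℝ)) ^ (1/η)) := by
        rw [Real.exp_le_exp]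
        have hmul : (δ/K) * ((|(τ:ℝ)| + (j:ℝ)) ^ (1/η)) ≤ (δ/K) * (K * (j:ℝ) ^ (1/η)) :=
          mul_le_mul_of_nonneg_left hrpow (by positivity)
        have heq : (δ/K) * (K * (j:ℝ) ^ (1/η)) = δ * (j:ℝ) ^ (1/η) := by
          field_simp
        nlinarith
      have habsc : ‖(τ:ℂ) - z‖ = ‖z - τ‖ :=
        norm_sub_rev _ _
      calc min (1 - Real.exp (-(2*Real.pi))) (4 * Real.exp (-Real.pi) * C) *
            Real.exp (-δ * (j:ℝ) ^ (1/η))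
          ≤ (4 * Real.exp (-Real.pi) * C) *
            Real.exp (-(δ/K) * ((|(τ:ℝ)|) + (j:ℝ)) ^ (1/η)) := by
            apply mul_le_mul (min_le_right _ _) hexp2 (Real.exp_pos _).le (by positivity)
        _ = 4 * Real.exp (-Real.pi) *
            (C * Real.exp (-(δ/K) * ((|(τ:ℝ)|) + (j:ℝ)) ^ (1/η))) := by ring
        _ ≤ 4 * Real.exp (-Real.pi) * ‖(τ:ℂ) - z‖ := by
            apply mul_le_mul_of_nonneg_left _ (by positivity)
            exact hCτ
        _ = 4 * Real.exp (-Real.pi) * ‖z - τ‖ := by rw [habsc]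
        _ ≤ ‖1 - Complex.exp (2 * Real.pi * Complex.I * z)‖ := hlow
  · intro h ε hε
    obtain ⟨C, hC, hCf⟩ := h ε hε
    refine ⟨min (1/(2*Real.pi)) (C/(4*Real.pi)), by positivity, ?_⟩
    intro τ j hj
    set z : ℂ := ω * (l j : ℂ) with hz
    rw [ge_iff_le]
    have hjpos : (0:ℝ) < (j:ℝ) := by exact_mod_cast hj
    have hbase : (0:ℝ) ≤ |(τ:ℝ)| + (j:ℝ) := by positivity
    have hrp0 : (0:ℝ) ≤ (|(τ:ℝ)| + (j:ℝ)) ^ (1/η) := Real.rpow_nonneg hbase _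
    have hexple : Real.exp (-ε * ((|(τ:ℝ)|) + (j:ℝ)) ^ (1/η)) ≤ 1 := by
      rw [Real.exp_le_one_iff]
      nlinarith
    have habsc : ‖(τ:ℂ) - z‖ = ‖z - τ‖ :=
      norm_sub_rev _ _
    rcases le_or_gt (2 * Real.pi * ‖z - τ‖) 1 with hcase | hcase
    · have hup := aux_upper z τ hcase
      have hlow := hCf j hj
      rw [ge_iff_le] at hlow
      have harg : 2 * (Real.pi:ℂ) * Complex.I * ω * (l j : ℂ) = 2 * Real.pi * Complex.I * z := by
        rw [hz]; ring
      rw [harg] at hlow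
      have hmono : Real.exp (-ε * ((|(τ:ℝ)|) + (j:ℝ)) ^ (1/η))
          ≤ Real.exp (-ε * (j:ℝ) ^ (1/η)) := by
        rw [Real.exp_le_exp]
        have : (j:ℝ) ^ (1/η) ≤ (|(τ:ℝ)| + (j:ℝ)) ^ (1/η) :=
          Real.rpow_le_rpow hjpos.le (le_add_of_nonneg_left (abs_nonneg _)) hinvpos.le
        nlinarith
      have hπpos := Real.pi_pos
      have hchain : C * Real.exp (-ε * (j:ℝ) ^ (1/η)) ≤ 4 * Real.pi * ‖z - τ‖ :=
        le_trans hlow hup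
      calc min (1/(2*Real.pi)) (C/(4*Real.pi)) * Real.exp (-ε * ((|(τ:ℝ)|) + (j:ℝ)) ^ (1/η))
          ≤ (C/(4*Real.pi)) * Real.exp (-ε * (j:ℝ) ^ (1/η)) := by
            apply mul_le_mul (min_le_right _ _) hmono (Real.exp_pos _).le (by positivity)
        _ ≤ ‖z - τ‖ := by
            rw [div_mul_eq_mul_div, div_le_iff₀ (by positivity)]
            nlinarith
        _ = ‖(τ:ℂ) - z‖ := habsc.symm
    · have hπpos := Real.pi_pos
      calc min (1/(2*Real.pi)) (C/(4*Real.pi)) * Real.exp (-ε * ((|(τ:ℝ)|) + (j:ℝ)) ^ (1/η))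
          ≤ (1/(2*Real.pi)) * 1 := by
            apply mul_le_mul (min_le_left _ _) hexple (Real.exp_pos _).le (by positivity)
        _ ≤ ‖z - τ‖ := by
            rw [mul_one, div_le_iff₀ (by positivity)]
            nlinarith
        _ = ‖(τ:ℂ) - z‖ := habsc.symm
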